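/- Let G be a graph on q²+q+1 vertices with diameter 2 and no 4-cycle, in which every vertex has degree q or q+1 (a polarity graph). Then the metric dimension of G satisfies β(G) ≥ 2q − 5. -/

import Mathlib

/-- The Kneser graph `K(k,n)`: vertices are the `k`-subsets of `[n]`,
adjacent iff disjoint. -/
def Kneser (k n : ℕ) : SimpleGraph {s : Finset (Fin n) // s.card = k} :=
  SimpleGraph.fromRel (fun u v => Disjoint u.1 v.1)

/-- `S` is a resolving set of `G`. -/
def IsResolvingSet {V : Type*} (G : SimpleGraph V) (S : Set V) : Prop :=
  ∀ u v : V, (∀ s ∈ S, G.dist s u = G.dist s v) → u = v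

/-- `G` contains no 4-cycle. -/
def C4Free {V : Type*} (G : SimpleGraph V) : Prop :=
  ∀ a b c d : V, a ≠ c → b ≠ d →
    ¬(G.Adj a b ∧ G.Adj b c ∧ G.Adj c d ∧ G.Adj d a)

theorem stmt_14 {V : Type*} [Fintype V] (G : SimpleGraph V) [DecidableRel G.Adj]
    (q : ℕ) (hcard : Fintype.card V = q ^ 2 + q + 1)
    (hdiam : G.diam = 2) (hc4 : C4Free G)
    (hdeg : ∀ v : V, G.degree v = q ∨ G.degree v = q + 1)
    (S : Finset V) (hres : IsResolvingSet G ↑S) :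
    2 * q - 5 ≤ S.card := by
  classical
  rcases Nat.lt_or_ge q 3 with hq | hq
  · omega
  by_contra hcon
  push_neg at hcon
  have hβ6 : S.card + 6 ≤ 2 * q := by omega
  -- basic distance facts
  have hne : G.ediam ≠ ⊤ :=
    SimpleGraph.ediam_ne_top_of_diam_ne_zero (by rw [hdiam]; omega)
  have hreach : ∀ u v : V, G.Reachable u v := fun u v =>
    SimpleGraph.reachable_of_edist_ne_top
      (fun h => hne (top_le_iff.mp (h ▸ SimpleGraph.edist_le_ediam)))
  have hdist2 : ∀ u v : V, G.dist u v ≤ 2 := fun u v => hdiam ▸ SimpleGraph.dist_le_diam hne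
  have hkey : ∀ s v : V, s ≠ v → G.dist s v = if G.Adj s v then 1 else 2 := by
    intro s v hsv
    have h0 : G.dist s v ≠ 0 := fun h => hsv ((hreach s v).dist_eq_zero_iff.mp h)
    by_cases ha : G.Adj s v
    · simp [ha, SimpleGraph.dist_eq_one_iff_adj.mpr ha]
    · have h1 : G.dist s v ≠ 1 := fun h => ha (SimpleGraph.dist_eq_one_iff_adj.mp h)
      have h2 := hdist2 s v
      simp only [ha, if_false]
      omega
  set T : Finset V := Finset.univ \ S with hT
  set code : V → Finset V := fun v => S.filter (fun s => G.Adj s v) with hcode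
  have hmemcode : ∀ s v : V, s ∈ code v ↔ s ∈ S ∧ G.Adj s v := by
    intro s v; simp [hcode]
  -- injectivity of the code on T
  have hinj : ∀ u ∈ T, ∀ v ∈ T, code u = code v → u = v := by
    intro u hu v hv h
    rw [hT, Finset.mem_sdiff] at hu hv
    apply hres
    intro s hs
    have hsS : s ∈ S := hs
    have hsu : s ≠ u := fun he => hu.2 (he ▸ hsS)
    have hsv : s ≠ v := fun he => hv.2 (he ▸ hsS)
    rw [hkey s u hsu, hkey s v hsv]
    have hadj : G.Adj s u ↔ G.Adj s v := by
      constructor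
      · intro ha
        have : s ∈ code v := h ▸ (hmemcode s u).mpr ⟨hsS, ha⟩
        exact ((hmemcode s v).mp this).2
      · intro ha
        have : s ∈ code u := h.symm ▸ (hmemcode s v).mpr ⟨hsS, ha⟩
        exact ((hmemcode s u).mp this).2
    by_cases ha : G.Adj s u
    · simp [ha, hadj.mp ha]
    · rw [if_neg ha, if_neg (fun hb => ha (hadj.mpr hb))]
  set P0 : Finset V := T.filter (fun v => (code v).card = 0) with hP0
  set P1 : Finset V := T.filter (fun v => (code v).card = 1) with hP1
  set P2 : Finset V := T.filter (fun v => 2 ≤ (code v).card) with hP2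
  have hTsub : T ⊆ (P0 ∪ P1) ∪ P2 := by
    intro v hv
    simp only [hP0, hP1, hP2, Finset.mem_union, Finset.mem_filter]
    have : (code v).card = 0 ∨ (code v).card = 1 ∨ 2 ≤ (code v).card := by omega
    tauto
  have hTcard : T.card ≤ P0.card + P1.card + P2.card := by
    calc T.card ≤ ((P0 ∪ P1) ∪ P2).card := Finset.card_le_card hTsub
      _ ≤ (P0 ∪ P1).card + P2.card := Finset.card_union_le _ _
      _ ≤ P0.card + P1.card + P2.card := by
          have := Finset.card_union_le P0 P1; omega
  have h0 : P0.card ≤ 1 := by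
    apply Finset.card_le_one.mpr
    intro a ha b hb
    rw [hP0, Finset.mem_filter] at ha hb
    apply hinj a ha.1 b hb.1
    rw [Finset.card_eq_zero.mp ha.2, Finset.card_eq_zero.mp hb.2]
  have h1 : P1.card ≤ S.card := by
    have : P1.card ≤ (S.image (fun s => ({s} : Finset V))).card := by
      apply Finset.card_le_card_of_injOn code
      · intro v hv
        rw [hP1, Finset.mem_coe, Finset.mem_filter] at hv
        obtain ⟨s, hs⟩ := Finset.card_eq_one.mp hv.2
        have hsS : s ∈ S := by
          have : s ∈ code v := hs ▸ Finset.mem_singleton_self s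
          exact ((hmemcode s v).mp this).1
        exact Finset.mem_image.mpr ⟨s, hsS, hs.symm⟩
      · intro a ha b hb h
        rw [hP1, Finset.coe_filter] at ha hb
        exact hinj a ha.1 b hb.1 h
    exact this.trans (Finset.card_image_le)
  -- edge counting
  have hdegq : ∀ s : V, G.degree s ≤ q + 1 := by
    intro s; rcases hdeg s with h | h <;> omega
  have hE : ∑ v ∈ T, (code v).card ≤ S.card * (q + 1) := by
    have hrw : ∀ v : V, (code v).card = ∑ s ∈ S, if G.Adj s v then 1 else 0 := by
      intro v; rw [hcode]; exact Finset.card_filter _ _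
    calc ∑ v ∈ T, (code v).card = ∑ v ∈ T, ∑ s ∈ S, (if G.Adj s v then 1 else 0) := by
          exact Finset.sum_congr rfl (fun v _ => hrw v)
      _ = ∑ s ∈ S, ∑ v ∈ T, (if G.Adj s v then 1 else 0) := Finset.sum_comm
      _ ≤ ∑ s ∈ S, (q + 1) := by
          apply Finset.sum_le_sum
          intro s _
          calc ∑ v ∈ T, (if G.Adj s v then 1 else 0) = (T.filter (fun v => G.Adj s v)).card :=
                (Finset.card_filter _ _).symm
            _ ≤ (Finset.univ.filter (fun v => G.Adj s v)).card :=
                Finset.card_le_card (Finset.filter_subset_filter _ (Finset.subset_univ T))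
            _ = G.degree s := by
                rw [← SimpleGraph.card_neighborFinset_eq_degree]
                congr 1
                ext w
                simp [SimpleGraph.mem_neighborFinset]
            _ ≤ q + 1 := hdegq s
      _ = S.card * (q + 1) := by rw [Finset.sum_const, smul_eq_mul]
  have hdisj : Disjoint P1 P2 := by
    rw [Finset.disjoint_left]
    intro a ha hb
    rw [hP1, Finset.mem_filter] at ha
    rw [hP2, Finset.mem_filter] at hb
    omega
  have hsum_ge : P1.card + 2 * P2.card ≤ ∑ v ∈ T, (code v).card := by
    have g1 : P1.card * 1 ≤ ∑ v ∈ P1, (code v).card := by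
      rw [← smul_eq_mul]
      apply Finset.card_nsmul_le_sum
      intro v hv
      rw [hP1, Finset.mem_filter] at hv
      omega
    have g2 : P2.card * 2 ≤ ∑ v ∈ P2, (code v).card := by
      rw [← smul_eq_mul]
      apply Finset.card_nsmul_le_sum
      intro v hv
      rw [hP2, Finset.mem_filter] at hv
      omega
    have g3 : ∑ v ∈ P1, (code v).card + ∑ v ∈ P2, (code v).card
        = ∑ v ∈ P1 ∪ P2, (code v).card := (Finset.sum_union hdisj).symm
    have g4 : ∑ v ∈ P1 ∪ P2, (code v).card ≤ ∑ v ∈ T, (code v).card := by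
      apply Finset.sum_le_sum_of_subset
      intro v hv
      rcases Finset.mem_union.mp hv with h | h
      · exact Finset.mem_of_mem_filter v h
      · exact Finset.mem_of_mem_filter v h
    omega
  have hScard : S.card ≤ Fintype.card V := Finset.card_le_univ S
  have hTval : T.card = q ^ 2 + q + 1 - S.card := by
    rw [hT, Finset.card_sdiff, Finset.inter_univ, Finset.card_univ, hcard]
  have hTval' : T.card + S.card = q ^ 2 + q + 1 := by
    rw [hTval]; rw [hcard] at hScard; omega
  -- combine everything
  have hprod : (S.card + 6) * (q + 4) ≤ 2 * q * (q + 4) :=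
    Nat.mul_le_mul_right _ hβ6
  nlinarith [hTcard, h0, h1, hE, hsum_ge, hTval', hprod]
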